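/- arXiv:2103.03646 — 5 statements merged into one kernel-verified Lean document; each statement's English description precedes it below -/
import Mathlib

section
/- Let (a(t), b(t)) be a pair of formal Laurent series over an algebraically closed field L of characteristic zero with a(0) = y₀ ∈ L, ord_t(a(t) − y₀) = k > 0, ord_t(b(t)) = r ≥ 0, and suppose k − r = n for a positive integer n. Then there exist exactly n formal power series s(t) ∈ L[[t]] of order one satisfying the associated differential equation a'(s(t))·s'(t) = n·t^{n−1}·b(s(t)). -/
noncomputable section

open PowerSeries Finset

variable {L : Type*} [Field L]

/-- composition of formal power series, meaningful when the constant
coefficient of `s` is zero (then `coeff n (s ^ k) = 0` for `k > n`, so the sum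
below is the full sum `Σ_k f_k · coeff_n(s^k)`). -/
def pscomp (f s : PowerSeries L) : PowerSeries L :=
  PowerSeries.mk fun n => ∑ k ∈ Finset.range (n + 1),
    PowerSeries.coeff k f * PowerSeries.coeff n (s ^ k)

/-- Core difference lemma for powers: if `g` and `h` agree below `m`, the
coefficients of `g^j` and `h^j` agree below `m`, and at `m` differ by
`j·g₀^{j-1}·(g_m - h_m)`. -/
lemma pow_coeff_diff (g h : PowerSeries L) (m : ℕ) (hm : 1 ≤ m)
    (hagree : ∀ i < m, PowerSeries.coeff i g = PowerSeries.coeff i h) :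
    ∀ (j e : ℕ), e ≤ m →
      PowerSeries.coeff e (g ^ j) - PowerSeries.coeff e (h ^ j) =
        if e = m then (j : L) * (PowerSeries.constantCoeff g) ^ (j - 1) *
          (PowerSeries.coeff m g - PowerSeries.coeff m h) else 0 := by
  intro j
  induction j with
  | zero => intro e he; simp
  | succ j ih =>
    intro e he
    set Δ : L := PowerSeries.coeff m g - PowerSeries.coeff m h with hΔ
    have h0 : PowerSeries.constantCoeff h = PowerSeries.constantCoeff g := by
      have := hagree 0 (by omega)
      simpa using this.symm
    rw [pow_succ, pow_succ, PowerSeries.coeff_mul, PowerSeries.coeff_mul,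
      ← Finset.sum_sub_distrib]
    have key : ∀ p ∈ HasAntidiagonal.antidiagonal e,
        PowerSeries.coeff p.1 (g ^ j) * PowerSeries.coeff p.2 g -
          PowerSeries.coeff p.1 (h ^ j) * PowerSeries.coeff p.2 h =
        (if p.1 = m then (j : L) * (PowerSeries.constantCoeff g) ^ (j - 1) * Δ else 0)
            * PowerSeries.coeff p.2 g
          + PowerSeries.coeff p.1 (h ^ j) * (if p.2 = m then Δ else 0) := by
      rintro ⟨i, i'⟩ hp
      rw [HasAntidiagonal.mem_antidiagonal] at hp
      have hi : i ≤ m := by omega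
      have hi' : i' ≤ m := by omega
      have d1 := ih i hi
      have d2 : PowerSeries.coeff i' g - PowerSeries.coeff i' h =
          if i' = m then Δ else 0 := by
        rcases eq_or_lt_of_le hi' with h | h
        · simp [h, hΔ]
        · rw [if_neg (by omega), hagree i' h, sub_self]
      simp only
      rw [← d1, ← d2]; ring
    rw [Finset.sum_congr rfl key, Finset.sum_add_distrib]
    rcases eq_or_lt_of_le he with he' | he'
    · subst he'
      have s1 : ∑ p ∈ HasAntidiagonal.antidiagonal e,
          (if p.1 = e then (j : L) * (PowerSeries.constantCoeff g) ^ (j - 1) * Δ else 0)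
            * PowerSeries.coeff p.2 g =
          (j : L) * (PowerSeries.constantCoeff g) ^ (j - 1) * Δ
            * PowerSeries.constantCoeff g := by
        rw [Finset.sum_eq_single (e, 0)]
        · simp
        · rintro ⟨i, i'⟩ hp hne
          rw [HasAntidiagonal.mem_antidiagonal] at hp
          rw [if_neg, zero_mul]
          rintro rfl
          exact hne (by simp; omega)
        · intro hmem
          exact absurd (HasAntidiagonal.mem_antidiagonal.2 (by omega)) hmem
      have s2 : ∑ p ∈ HasAntidiagonal.antidiagonal e,
          PowerSeries.coeff p.1 (h ^ j) * (if p.2 = e then Δ else 0) =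
          (PowerSeries.constantCoeff g) ^ j * Δ := by
        rw [Finset.sum_eq_single (0, e)]
        · rw [if_pos rfl]
          simp [h0]
        · rintro ⟨i, i'⟩ hp hne
          rw [HasAntidiagonal.mem_antidiagonal] at hp
          rw [if_neg, mul_zero]
          rintro rfl
          exact hne (by simp; omega)
        · intro hmem
          exact absurd (HasAntidiagonal.mem_antidiagonal.2 (by omega)) hmem
      rw [s1, s2, if_pos rfl]
      rcases Nat.eq_zero_or_pos j with rfl | hj
      · simp
      · obtain ⟨j0, rfl⟩ : ∃ j0, j = j0 + 1 := ⟨j - 1, by omega⟩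
        simp only [Nat.add_sub_cancel, pow_succ]
        push_cast
        ring
    · rw [if_neg (by omega)]
      have z1 : ∀ p ∈ HasAntidiagonal.antidiagonal e,
          (if p.1 = m then (j : L) * (PowerSeries.constantCoeff g) ^ (j - 1) * Δ else 0)
            * PowerSeries.coeff p.2 g = 0 := by
        rintro ⟨i, i'⟩ hp
        rw [HasAntidiagonal.mem_antidiagonal] at hp
        rw [if_neg (by omega), zero_mul]
      have z2 : ∀ p ∈ HasAntidiagonal.antidiagonal e,
          PowerSeries.coeff p.1 (h ^ j) * (if p.2 = m then Δ else 0) = 0 := by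
        rintro ⟨i, i'⟩ hp
        rw [HasAntidiagonal.mem_antidiagonal] at hp
        rw [if_neg (by omega), mul_zero]
      rw [Finset.sum_eq_zero z1, Finset.sum_eq_zero z2, add_zero]

lemma coeff_shift_of_X_mul (g : PowerSeries L) (i : ℕ) :
    PowerSeries.coeff i g = PowerSeries.coeff (i + 1) (X * g) := by
  rw [PowerSeries.coeff_succ_X_mul]

/-- coefficients of `s^j` below `j` vanish when `s(0) = 0`. -/
lemma coeff_pow_eq_zero_of_lt {s : PowerSeries L}
    (hs : PowerSeries.constantCoeff s = 0) {d j : ℕ} (h : d < j) :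
    PowerSeries.coeff d (s ^ j) = 0 := by
  obtain ⟨g, rfl⟩ := PowerSeries.X_dvd_iff.2 hs
  rw [mul_pow, PowerSeries.coeff_X_pow_mul', if_neg (by omega)]

/-- leading coefficient of `s^j` when `s(0) = 0`. -/
lemma coeff_pow_self {s : PowerSeries L}
    (hs : PowerSeries.constantCoeff s = 0) (j : ℕ) :
    PowerSeries.coeff j (s ^ j) = (PowerSeries.coeff 1 s) ^ j := by
  obtain ⟨g, rfl⟩ := PowerSeries.X_dvd_iff.2 hs
  rw [mul_pow, PowerSeries.coeff_X_pow_mul', if_pos le_rfl, Nat.sub_self,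
    PowerSeries.coeff_zero_eq_constantCoeff, map_pow]
  congr 1
  rw [← PowerSeries.coeff_zero_eq_constantCoeff_apply, coeff_shift_of_X_mul]

/-- difference lemma for powers of order-`≥1` series. -/
lemma spow_coeff_diff (s u : PowerSeries L)
    (hs : PowerSeries.constantCoeff s = 0) (hu : PowerSeries.constantCoeff u = 0)
    (m : ℕ) (hm : 1 ≤ m)
    (hagree : ∀ i ≤ m, PowerSeries.coeff i s = PowerSeries.coeff i u)
    (j d : ℕ) (hd : d ≤ m + j) :
    PowerSeries.coeff d (s ^ j) - PowerSeries.coeff d (u ^ j) =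
      if d = m + j then (j : L) * (PowerSeries.coeff 1 s) ^ (j - 1) *
        (PowerSeries.coeff (m + 1) s - PowerSeries.coeff (m + 1) u) else 0 := by
  obtain ⟨g, rfl⟩ := PowerSeries.X_dvd_iff.2 hs
  obtain ⟨h, rfl⟩ := PowerSeries.X_dvd_iff.2 hu
  have hcg : ∀ i, PowerSeries.coeff i g = PowerSeries.coeff (i + 1) (X * g) :=
    fun i => coeff_shift_of_X_mul g i
  have hch : ∀ i, PowerSeries.coeff i h = PowerSeries.coeff (i + 1) (X * h) :=
    fun i => coeff_shift_of_X_mul h i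
  have hag : ∀ i < m, PowerSeries.coeff i g = PowerSeries.coeff i h := by
    intro i hi
    rw [hcg, hch]
    exact hagree (i + 1) (by omega)
  rw [mul_pow, mul_pow, PowerSeries.coeff_X_pow_mul', PowerSeries.coeff_X_pow_mul']
  by_cases hjd : j ≤ d
  · rw [if_pos hjd, if_pos hjd]
    have := pow_coeff_diff g h m hm hag j (d - j) (by omega)
    rw [this]
    have hc1 : PowerSeries.constantCoeff g = PowerSeries.coeff 1 (X * g) := by
      rw [← PowerSeries.coeff_zero_eq_constantCoeff_apply, coeff_shift_of_X_mul]
    rw [hc1, hcg m, hch m]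
    by_cases hdm : d = m + j
    · rw [if_pos (by omega), if_pos hdm]
    · rw [if_neg (by omega), if_neg hdm]
  · rw [if_neg hjd, if_neg hjd, sub_self, if_neg (by omega)]

lemma coeff_pscomp (f s : PowerSeries L) (d : ℕ) :
    PowerSeries.coeff d (pscomp f s) = ∑ j ∈ Finset.range (d + 1),
      PowerSeries.coeff j f * PowerSeries.coeff d (s ^ j) := by
  rw [pscomp, PowerSeries.coeff_mk]

lemma pscomp_coeff_eq_zero (f s : PowerSeries L) (ℓ : ℕ)
    (hf : ∀ j < ℓ, PowerSeries.coeff j f = 0) {d : ℕ} (hd : d < ℓ) :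
    PowerSeries.coeff d (pscomp f s) = 0 := by
  rw [coeff_pscomp]
  refine Finset.sum_eq_zero fun j hj => ?_
  rw [Finset.mem_range] at hj
  rw [hf j (by omega), zero_mul]

lemma pscomp_coeff_lead (f s : PowerSeries L) (ℓ : ℕ)
    (hf : ∀ j < ℓ, PowerSeries.coeff j f = 0)
    (hs : PowerSeries.constantCoeff s = 0) :
    PowerSeries.coeff ℓ (pscomp f s) =
      PowerSeries.coeff ℓ f * (PowerSeries.coeff 1 s) ^ ℓ := by
  rw [coeff_pscomp, Finset.sum_eq_single ℓ]
  · rw [coeff_pow_self hs]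
  · intro j hj hne
    rw [Finset.mem_range] at hj
    rw [hf j (by omega), zero_mul]
  · intro hmem
    exact absurd (Finset.mem_range.2 (by omega)) hmem

lemma pscomp_coeff_diff (f s u : PowerSeries L) (ℓ m : ℕ)
    (hf : ∀ j < ℓ, PowerSeries.coeff j f = 0)
    (hs : PowerSeries.constantCoeff s = 0) (hu : PowerSeries.constantCoeff u = 0)
    (hm : 1 ≤ m)
    (hagree : ∀ i ≤ m, PowerSeries.coeff i s = PowerSeries.coeff i u)
    (d : ℕ) (hd : d ≤ m + ℓ) :
    PowerSeries.coeff d (pscomp f s) - PowerSeries.coeff d (pscomp f u) =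
      if d = m + ℓ then PowerSeries.coeff ℓ f * ((ℓ : L) *
        (PowerSeries.coeff 1 s) ^ (ℓ - 1)) *
        (PowerSeries.coeff (m + 1) s - PowerSeries.coeff (m + 1) u) else 0 := by
  rw [coeff_pscomp, coeff_pscomp, ← Finset.sum_sub_distrib]
  have key : ∀ j ∈ Finset.range (d + 1),
      PowerSeries.coeff j f * PowerSeries.coeff d (s ^ j) -
        PowerSeries.coeff j f * PowerSeries.coeff d (u ^ j) =
      if j = ℓ ∧ d = m + ℓ then PowerSeries.coeff ℓ f * ((ℓ : L) *
        (PowerSeries.coeff 1 s) ^ (ℓ - 1)) *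
        (PowerSeries.coeff (m + 1) s - PowerSeries.coeff (m + 1) u) else 0 := by
    intro j hj
    rw [Finset.mem_range] at hj
    rw [← mul_sub]
    by_cases hjl : j < ℓ
    · rw [hf j hjl, zero_mul, if_neg (by omega)]
    · push_neg at hjl
      rw [spow_coeff_diff s u hs hu m hm hagree j d (by omega)]
      by_cases hdj : d = m + j
      · have hjeq : j = ℓ := by omega
        subst hjeq
        rw [if_pos hdj, if_pos ⟨rfl, hdj⟩]
        ring
      · rw [if_neg hdj, mul_zero, if_neg (by omega)]
  rw [Finset.sum_congr rfl key]
  by_cases hdm : d = m + ℓ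
  · rw [if_pos hdm, Finset.sum_eq_single ℓ]
    · rw [if_pos ⟨rfl, hdm⟩]
    · intro j hj hne
      rw [if_neg (by simp [hne])]
    · intro hmem
      exact absurd (Finset.mem_range.2 (by omega)) hmem
  · rw [if_neg hdm]
    refine Finset.sum_eq_zero fun j hj => ?_
    rw [if_neg (by tauto)]

lemma coeff_deriv (s : PowerSeries L) (i : ℕ) :
    PowerSeries.coeff i s.derivativeFun =
      PowerSeries.coeff (i + 1) s * ((i : L) + 1) := by
  exact PowerSeries.coeff_derivative s i

lemma comp_mul_deriv_coeff_lt (f s : PowerSeries L) (ℓ : ℕ)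
    (hf : ∀ j < ℓ, PowerSeries.coeff j f = 0) {d : ℕ} (hd : d < ℓ) :
    PowerSeries.coeff d (pscomp f s * s.derivativeFun) = 0 := by
  rw [PowerSeries.coeff_mul]
  refine Finset.sum_eq_zero fun p hp => ?_
  rw [HasAntidiagonal.mem_antidiagonal] at hp
  rw [pscomp_coeff_eq_zero f s ℓ hf (by omega), zero_mul]

lemma comp_mul_deriv_coeff_lead (f s : PowerSeries L) (ℓ : ℕ)
    (hf : ∀ j < ℓ, PowerSeries.coeff j f = 0)
    (hs : PowerSeries.constantCoeff s = 0) :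
    PowerSeries.coeff ℓ (pscomp f s * s.derivativeFun) =
      PowerSeries.coeff ℓ f * (PowerSeries.coeff 1 s) ^ (ℓ + 1) := by
  rw [PowerSeries.coeff_mul, Finset.sum_eq_single (ℓ, 0)]
  · rw [pscomp_coeff_lead f s ℓ hf hs, coeff_deriv]
    push_cast
    rw [pow_succ]
    ring
  · rintro ⟨i, i'⟩ hp hne
    rw [HasAntidiagonal.mem_antidiagonal] at hp
    have : i < ℓ := by
      rcases Nat.lt_or_ge i ℓ with h | h
      · exact h
      · exact absurd (by simp at hp ⊢; omega : (i, i') = (ℓ, 0)) hne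
    rw [pscomp_coeff_eq_zero f s ℓ hf this, zero_mul]
  · intro hmem
    exact absurd (HasAntidiagonal.mem_antidiagonal.2 (by omega)) hmem

/-- The main difference lemma for `pscomp f s * s'`. -/
lemma comp_mul_deriv_coeff_diff (f s u : PowerSeries L) (ℓ m : ℕ)
    (hf : ∀ j < ℓ, PowerSeries.coeff j f = 0)
    (hs : PowerSeries.constantCoeff s = 0) (hu : PowerSeries.constantCoeff u = 0)
    (hm : 1 ≤ m)
    (hagree : ∀ i ≤ m, PowerSeries.coeff i s = PowerSeries.coeff i u) :
    PowerSeries.coeff (ℓ + m) (pscomp f s * s.derivativeFun) -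
      PowerSeries.coeff (ℓ + m) (pscomp f u * u.derivativeFun) =
      PowerSeries.coeff ℓ f * (PowerSeries.coeff 1 s) ^ ℓ *
        ((ℓ : L) + (m : L) + 1) *
        (PowerSeries.coeff (m + 1) s - PowerSeries.coeff (m + 1) u) := by
  set c := PowerSeries.coeff 1 s with hc
  set Δ := PowerSeries.coeff (m + 1) s - PowerSeries.coeff (m + 1) u with hΔ
  rw [PowerSeries.coeff_mul, PowerSeries.coeff_mul, ← Finset.sum_sub_distrib]
  have key : ∀ p ∈ HasAntidiagonal.antidiagonal (ℓ + m),
      PowerSeries.coeff p.1 (pscomp f s) * PowerSeries.coeff p.2 s.derivativeFun -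
        PowerSeries.coeff p.1 (pscomp f u) * PowerSeries.coeff p.2 u.derivativeFun =
      (if p.1 = m + ℓ then PowerSeries.coeff ℓ f * ((ℓ : L) * c ^ (ℓ - 1)) * Δ else 0)
          * PowerSeries.coeff p.2 s.derivativeFun
        + PowerSeries.coeff p.1 (pscomp f u) *
          (PowerSeries.coeff p.2 s.derivativeFun -
            PowerSeries.coeff p.2 u.derivativeFun) := by
    rintro ⟨i, i'⟩ hp
    rw [HasAntidiagonal.mem_antidiagonal] at hp
    have d1 := pscomp_coeff_diff f s u ℓ m hf hs hu hm hagree i (by omega)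
    simp only at d1 ⊢
    rw [← d1]
    ring
  rw [Finset.sum_congr rfl key, Finset.sum_add_distrib]
  have s1 : ∑ p ∈ HasAntidiagonal.antidiagonal (ℓ + m),
      (if p.1 = m + ℓ then PowerSeries.coeff ℓ f * ((ℓ : L) * c ^ (ℓ - 1)) * Δ else 0)
        * PowerSeries.coeff p.2 s.derivativeFun =
      PowerSeries.coeff ℓ f * ((ℓ : L) * c ^ (ℓ - 1)) * Δ * (c * 1) := by
    rw [Finset.sum_eq_single (ℓ + m, 0)]
    · rw [if_pos (by omega), coeff_deriv]
      norm_num [hc]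
    · rintro ⟨i, i'⟩ hp hne
      rw [HasAntidiagonal.mem_antidiagonal] at hp
      rw [if_neg (by simp at hne ⊢; omega), zero_mul]
    · intro hmem
      exact absurd (HasAntidiagonal.mem_antidiagonal.2 (by omega)) hmem
  have s2 : ∑ p ∈ HasAntidiagonal.antidiagonal (ℓ + m),
      PowerSeries.coeff p.1 (pscomp f u) *
        (PowerSeries.coeff p.2 s.derivativeFun -
          PowerSeries.coeff p.2 u.derivativeFun) =
      PowerSeries.coeff ℓ f * c ^ ℓ * (((m : L) + 1) * Δ) := by
    rw [Finset.sum_eq_single (ℓ, m)]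
    · rw [pscomp_coeff_lead f u ℓ hf hu, coeff_deriv, coeff_deriv]
      have hc1 : PowerSeries.coeff 1 u = c := (hagree 1 hm).symm
      rw [hc1]
      ring
    · rintro ⟨i, i'⟩ hp hne
      rw [HasAntidiagonal.mem_antidiagonal] at hp
      rcases Nat.lt_or_ge i' m with h | h
      · rw [coeff_deriv, coeff_deriv, hagree (i' + 1) (by omega), sub_self, mul_zero]
      · rcases Nat.eq_or_lt_of_le h with h' | h'
        · exact absurd (by simp; omega : (i, i') = (ℓ, m)) hne
        · rw [pscomp_coeff_eq_zero f u ℓ hf (by omega), zero_mul]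
    · intro hmem
      exact absurd (HasAntidiagonal.mem_antidiagonal.2 (by omega)) hmem
  rw [s1, s2]
  rcases Nat.eq_zero_or_pos ℓ with rfl | hl
  · push_cast; ring
  · have hpow : c ^ (ℓ - 1) * c = c ^ ℓ := by
      conv_rhs => rw [← Nat.sub_add_cancel hl]
      rw [pow_succ]
    calc PowerSeries.coeff ℓ f * ((ℓ : L) * c ^ (ℓ - 1)) * Δ * (c * 1) +
          PowerSeries.coeff ℓ f * c ^ ℓ * (((m : L) + 1) * Δ)
        = PowerSeries.coeff ℓ f * (ℓ : L) * (c ^ (ℓ - 1) * c) * Δ +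
          PowerSeries.coeff ℓ f * c ^ ℓ * (((m : L) + 1) * Δ) := by ring
      _ = PowerSeries.coeff ℓ f * c ^ ℓ * ((ℓ : L) + (m : L) + 1) * Δ := by
          rw [hpow]; ring

lemma rhs_coeff (b s : PowerSeries L) (n : ℕ) (d : ℕ) :
    PowerSeries.coeff d ((n : PowerSeries L) * X ^ (n - 1) * pscomp b s) =
      if n - 1 ≤ d then (n : L) * PowerSeries.coeff (d - (n - 1)) (pscomp b s)
      else 0 := by
  have : (n : PowerSeries L) = PowerSeries.C (n : L) := by
    rw [map_natCast]
  rw [this, mul_assoc, PowerSeries.coeff_C_mul, PowerSeries.coeff_X_pow_mul']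
  split_ifs with h
  · rfl
  · rw [mul_zero]

/-- the defect of the associated differential equation. -/
def psdefect (a b : PowerSeries L) (n : ℕ) (s : PowerSeries L) : PowerSeries L :=
  pscomp a.derivativeFun s * s.derivativeFun -
    (n : PowerSeries L) * PowerSeries.X ^ (n - 1) * pscomp b s

/-- recursive construction of (truncations of) a solution. -/
def buildT (a b : PowerSeries L) (n k : ℕ) (κ c : L) : ℕ → PowerSeries L
  | 0 => PowerSeries.C c * PowerSeries.X
  | m + 1 =>
    buildT a b n k κ c m +
      (PowerSeries.monomial (m + 2))
        (-(PowerSeries.coeff (k + m) (psdefect a b n (buildT a b n k κ c m))) /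
          (κ * ((n : L) + (m : L) + 1)))

/-- the solution built from the truncations. -/
def buildS (a b : PowerSeries L) (n k : ℕ) (κ c : L) : PowerSeries L :=
  PowerSeries.mk fun i => PowerSeries.coeff i (buildT a b n k κ c i)

lemma buildT_coeff_high (a b : PowerSeries L) (n k : ℕ) (κ c : L) :
    ∀ m i, m + 1 < i → PowerSeries.coeff i (buildT a b n k κ c m) = 0 := by
  intro m
  induction m with
  | zero =>
    intro i hi
    rw [buildT, PowerSeries.coeff_C_mul, PowerSeries.coeff_X, if_neg (by omega), mul_zero]
  | succ m ih =>
    intro i hi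
    rw [buildT, map_add, ih i (by omega), PowerSeries.coeff_monomial,
      if_neg (by omega), add_zero]

lemma buildT_stab (a b : PowerSeries L) (n k : ℕ) (κ c : L) :
    ∀ m m', m ≤ m' → ∀ i ≤ m + 1,
      PowerSeries.coeff i (buildT a b n k κ c m') =
        PowerSeries.coeff i (buildT a b n k κ c m) := by
  intro m m' h
  induction m', h using Nat.le_induction with
  | base => intro i _; rfl
  | succ m' hmm' ih =>
    intro i hi
    rw [buildT, map_add, ih i hi, PowerSeries.coeff_monomial, if_neg (by omega), add_zero]

lemma buildS_coeff (a b : PowerSeries L) (n k : ℕ) (κ c : L) :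
    ∀ m i, i ≤ m + 1 → PowerSeries.coeff i (buildS a b n k κ c) =
      PowerSeries.coeff i (buildT a b n k κ c m) := by
  intro m i hi
  rw [buildS, PowerSeries.coeff_mk]
  rcases Nat.lt_or_ge i (m + 1) with h | h
  · exact (buildT_stab a b n k κ c i m (by omega) i (by omega)).symm
  · have hieq : i = m + 1 := by omega
    subst hieq
    exact buildT_stab a b n k κ c m (m + 1) (by omega) (m + 1) le_rfl

/-- **Counting the solutions of the associated differential equation.**
Let `L` be an algebraically closed field of characteristic zero and let
`a, b ∈ L[[t]]` be formal power series with `a(0) = y₀`,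
`ord_t(a − y₀) = k > 0`, `ord_t(b) = r ≥ 0` and `k − r = n` for a positive
integer `n`.  Then there are exactly `n` formal power series `s(t) ∈ L[[t]]` of
order one (`s(0) = 0`, `s'(0) ≠ 0`) satisfying the associated differential
equation `a'(s(t)) · s'(t) = n · t^{n−1} · b(s(t))`. -/
theorem associated_equation_solution_count
    [IsAlgClosed L] [CharZero L]
    (a b : PowerSeries L) (y0 : L) (k r n : ℕ)
    (hy0 : PowerSeries.constantCoeff a = y0)
    (hk : (a - PowerSeries.C y0).order = k) (hkpos : 0 < k)
    (hr : b.order = r)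
    (hn : (k : ℤ) - r = n) (hnpos : 0 < n) :
    {s : PowerSeries L |
        PowerSeries.constantCoeff s = 0 ∧ PowerSeries.coeff 1 s ≠ 0 ∧
        pscomp a.derivativeFun s * s.derivativeFun =
          (n : PowerSeries L) * PowerSeries.X ^ (n - 1) * pscomp b s}.ncard = n := by
  have hk' : k = n + r := by omega
  -- coefficients of `a`
  have hka := PowerSeries.order_eq_nat.1 hk
  have hαne : PowerSeries.coeff k a ≠ 0 := by
    have := hka.1
    rwa [map_sub, PowerSeries.coeff_C, if_neg (by omega), sub_zero] at this
  have ha0 : ∀ i, 1 ≤ i → i < k → PowerSeries.coeff i a = 0 := by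
    intro i h1 h2
    have := hka.2 i (by exact_mod_cast h2)
    rwa [map_sub, PowerSeries.coeff_C, if_neg (by omega), sub_zero] at this
  -- coefficients of `b`
  have hrb := PowerSeries.order_eq_nat.1 hr
  have hβne : PowerSeries.coeff r b ≠ 0 := hrb.1
  have hb0 : ∀ j < r, PowerSeries.coeff j b = 0 := fun j hj =>
    hrb.2 j (by exact_mod_cast hj)
  set α := PowerSeries.coeff k a with hα
  set β := PowerSeries.coeff r b with hβ
  -- coefficients of `a'`
  have hfa : ∀ j < k - 1, PowerSeries.coeff j a.derivativeFun = 0 := by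
    intro j hj
    rw [coeff_deriv, ha0 (j + 1) (by omega) (by omega), zero_mul]
  have hk1 : k - 1 + 1 = k := by omega
  have hcast : ((k - 1 : ℕ) : L) + 1 = (k : L) := by exact_mod_cast congrArg Nat.cast hk1
  have hfk : PowerSeries.coeff (k - 1) a.derivativeFun = α * (k : L) := by
    rw [coeff_deriv, hk1, hcast, ← hα]
  -- the low coefficients of the defect vanish
  have hElt : ∀ (s : PowerSeries L) (d : ℕ), d < k - 1 →
      PowerSeries.coeff d (psdefect a b n s) = 0 := by
    intro s d hd
    rw [psdefect, map_sub, comp_mul_deriv_coeff_lt a.derivativeFun s (k - 1) hfa hd,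
      rhs_coeff, zero_sub, neg_eq_zero]
    split_ifs with h
    · rw [pscomp_coeff_eq_zero b s r hb0 (by omega), mul_zero]
    · rfl
  -- the leading coefficient of the defect
  have hE0 : ∀ s : PowerSeries L, PowerSeries.constantCoeff s = 0 →
      PowerSeries.coeff (k - 1) (psdefect a b n s) =
        (k : L) * α * (PowerSeries.coeff 1 s) ^ k -
          (n : L) * β * (PowerSeries.coeff 1 s) ^ r := by
    intro s hs
    rw [psdefect, map_sub, comp_mul_deriv_coeff_lead a.derivativeFun s (k - 1) hfa hs,
      hfk, hk1, rhs_coeff, if_pos (by omega : n - 1 ≤ k - 1)]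
    have : k - 1 - (n - 1) = r := by omega
    rw [this, pscomp_coeff_lead b s r hb0 hs]
    ring
  -- the key difference identity
  have keyED : ∀ s u : PowerSeries L, PowerSeries.constantCoeff s = 0 →
      PowerSeries.constantCoeff u = 0 →
      (k : L) * α * (PowerSeries.coeff 1 s) ^ n = (n : L) * β →
      ∀ m, 1 ≤ m → (∀ i ≤ m, PowerSeries.coeff i s = PowerSeries.coeff i u) →
      PowerSeries.coeff (k - 1 + m) (psdefect a b n s) -
        PowerSeries.coeff (k - 1 + m) (psdefect a b n u) =
        ((k : L) * α * (PowerSeries.coeff 1 s) ^ (k - 1) * ((n : L) + (m : L))) *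
          (PowerSeries.coeff (m + 1) s - PowerSeries.coeff (m + 1) u) := by
    intro s u hs hu hrel m hm hagree
    set c := PowerSeries.coeff 1 s with hc
    set Δ := PowerSeries.coeff (m + 1) s - PowerSeries.coeff (m + 1) u with hΔ
    have hL := comp_mul_deriv_coeff_diff a.derivativeFun s u (k - 1) m hfa hs hu hm hagree
    have hRd : PowerSeries.coeff (k - 1 + m)
          ((n : PowerSeries L) * X ^ (n - 1) * pscomp b s) -
        PowerSeries.coeff (k - 1 + m)
          ((n : PowerSeries L) * X ^ (n - 1) * pscomp b u) =
        (n : L) * (β * ((r : L) * c ^ (r - 1)) * Δ) := by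
      rw [rhs_coeff, rhs_coeff, if_pos (by omega : n - 1 ≤ k - 1 + m),
        if_pos (by omega : n - 1 ≤ k - 1 + m)]
      have hrm : k - 1 + m - (n - 1) = r + m := by omega
      rw [hrm, ← mul_sub,
        pscomp_coeff_diff b s u r m hb0 hs hu hm hagree (r + m) (by omega),
        if_pos (by omega)]
    rw [psdefect, psdefect, map_sub, map_sub]
    have expand : ∀ x y z w : L, x - y - (z - w) = (x - z) - (y - w) := fun x y z w => by ring
    rw [expand, hL, hRd, hfk]
    -- now pure algebra
    have hknr : (k : L) = (n : L) + (r : L) := by exact_mod_cast congrArg Nat.cast hk'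
    have hsimp : (n : L) * (β * ((r : L) * c ^ (r - 1))) =
        (k : L) * α * c ^ (k - 1) * (r : L) := by
      rcases Nat.eq_zero_or_pos r with rfl | hrpos
      · simp
      · have hpow : c ^ n * c ^ (r - 1) = c ^ (k - 1) := by
          rw [← pow_add]
          congr 1
          omega
        calc (n : L) * (β * ((r : L) * c ^ (r - 1)))
            = ((n : L) * β) * c ^ (r - 1) * (r : L) := by ring
          _ = ((k : L) * α * c ^ n) * c ^ (r - 1) * (r : L) := by rw [hrel]
          _ = (k : L) * α * (c ^ n * c ^ (r - 1)) * (r : L) := by ring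
          _ = (k : L) * α * c ^ (k - 1) * (r : L) := by rw [hpow]
    calc α * (k : L) * c ^ (k - 1) * (((k - 1 : ℕ) : L) + (m : L) + 1) * Δ -
          (n : L) * (β * ((r : L) * c ^ (r - 1)) * Δ)
        = α * (k : L) * c ^ (k - 1) * ((k : L) + (m : L)) * Δ -
          ((n : L) * (β * ((r : L) * c ^ (r - 1)))) * Δ := by
          rw [← hcast]; ring
      _ = α * (k : L) * c ^ (k - 1) * ((k : L) + (m : L)) * Δ -
          ((k : L) * α * c ^ (k - 1) * (r : L)) * Δ := by rw [hsimp]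
      _ = ((k : L) * α * c ^ (k - 1) * ((n : L) + (m : L))) * Δ := by
          rw [hknr]; ring
  -- auxiliary nonzero facts
  have knz : (k : L) ≠ 0 := Nat.cast_ne_zero.2 (by omega)
  have nnz : (n : L) ≠ 0 := Nat.cast_ne_zero.2 (by omega)
  -- the root relation satisfied by any solution
  have hroot : ∀ s : PowerSeries L, PowerSeries.constantCoeff s = 0 →
      PowerSeries.coeff 1 s ≠ 0 → psdefect a b n s = 0 →
      (k : L) * α * (PowerSeries.coeff 1 s) ^ n = (n : L) * β := by
    intro s hs0 hs1 hsd
    have h0 := hE0 s hs0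
    rw [hsd, map_zero] at h0
    have h1 : (k : L) * α * (PowerSeries.coeff 1 s) ^ k =
        (n : L) * β * (PowerSeries.coeff 1 s) ^ r := sub_eq_zero.1 h0.symm
    have hpow : (PowerSeries.coeff 1 s) ^ k =
        (PowerSeries.coeff 1 s) ^ n * (PowerSeries.coeff 1 s) ^ r := by
      rw [← pow_add, hk']
    apply mul_right_cancel₀ (pow_ne_zero r hs1)
    linear_combination h1 - (k : L) * α * hpow
  -- uniqueness of solutions with a given linear coefficient
  have huniq : ∀ s u : PowerSeries L,
      PowerSeries.constantCoeff s = 0 → PowerSeries.coeff 1 s ≠ 0 →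
      psdefect a b n s = 0 →
      PowerSeries.constantCoeff u = 0 → PowerSeries.coeff 1 u ≠ 0 →
      psdefect a b n u = 0 →
      PowerSeries.coeff 1 s = PowerSeries.coeff 1 u → s = u := by
    intro s u hs0 hs1 hsd hu0 hu1 hud h1
    have main : ∀ i, ∀ i' ≤ i, PowerSeries.coeff i' s = PowerSeries.coeff i' u := by
      intro i
      induction i with
      | zero =>
        intro i' hi'
        interval_cases i'
        rw [PowerSeries.coeff_zero_eq_constantCoeff_apply,
          PowerSeries.coeff_zero_eq_constantCoeff_apply, hs0, hu0]
      | succ i ih =>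
        intro i' hi'
        rcases Nat.lt_or_ge i' (i + 1) with h | h
        · exact ih i' (by omega)
        · have hieq : i' = i + 1 := by omega
          subst hieq
          rcases Nat.eq_zero_or_pos i with rfl | hipos
          · exact h1
          · have hrel := hroot s hs0 hs1 hsd
            have hED := keyED s u hs0 hu0 hrel i hipos (fun j hj => ih j hj)
            simp only [hsd, hud, map_zero, sub_self] at hED
            have hfac : (k : L) * α * (PowerSeries.coeff 1 s) ^ (k - 1) *
                ((n : L) + (i : L)) ≠ 0 := by
              have hni : (n : L) + (i : L) ≠ 0 := by
                have : ((n + i : ℕ) : L) ≠ 0 := Nat.cast_ne_zero.2 (by omega)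
                push_cast at this
                exact this
              exact mul_ne_zero (mul_ne_zero (mul_ne_zero knz hαne)
                (pow_ne_zero _ hs1)) hni
            have := (mul_eq_zero.1 hED.symm).resolve_left hfac
            exact sub_eq_zero.1 this
    exact PowerSeries.ext fun i => main i i le_rfl
  -- existence of a solution for each root
  have hexist : ∀ c : L, (k : L) * α * c ^ n = (n : L) * β →
      ∃ s : PowerSeries L, PowerSeries.constantCoeff s = 0 ∧
        PowerSeries.coeff 1 s ≠ 0 ∧ psdefect a b n s = 0 ∧
        PowerSeries.coeff 1 s = c := by
    intro c hrel
    have hc0 : c ≠ 0 := by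
      intro hc
      rw [hc, zero_pow (by omega), mul_zero] at hrel
      exact mul_ne_zero nnz hβne hrel.symm
    set κ := (k : L) * α * c ^ (k - 1) with hκ
    have hκ0 : κ ≠ 0 := mul_ne_zero (mul_ne_zero knz hαne) (pow_ne_zero _ hc0)
    set s := buildS a b n k κ c with hsdef
    have hsT := buildS_coeff a b n k κ c
    have hs0 : PowerSeries.constantCoeff s = 0 := by
      rw [← PowerSeries.coeff_zero_eq_constantCoeff_apply, hsT 0 0 (by omega), buildT,
        PowerSeries.coeff_C_mul, PowerSeries.coeff_zero_X, mul_zero]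
    have hs1 : PowerSeries.coeff 1 s = c := by
      rw [hsT 0 1 le_rfl, buildT, PowerSeries.coeff_C_mul, PowerSeries.coeff_one_X, mul_one]
    have hTop : ∀ m0 : ℕ, PowerSeries.coeff (m0 + 2) (buildT a b n k κ c (m0 + 1)) =
        -(PowerSeries.coeff (k + m0) (psdefect a b n (buildT a b n k κ c m0))) /
          (κ * ((n : L) + (m0 : L) + 1)) := by
      intro m0
      rw [buildT, map_add, buildT_coeff_high a b n k κ c m0 (m0 + 2) (by omega),
        PowerSeries.coeff_monomial, if_pos rfl, zero_add]
    refine ⟨s, hs0, hs1 ▸ hc0, ?_, hs1⟩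
    ext d
    rw [map_zero]
    rcases Nat.lt_or_ge d (k - 1) with hd | hd
    · exact hElt s d hd
    obtain ⟨m, rfl⟩ : ∃ m, d = k - 1 + m := ⟨d - (k - 1), by omega⟩
    rcases Nat.eq_zero_or_pos m with rfl | hmpos
    · rw [add_zero, hE0 s hs0, hs1, sub_eq_zero]
      calc (k : L) * α * c ^ k = ((k : L) * α * c ^ n) * c ^ r := by
            rw [hk', pow_add]; ring
        _ = (n : L) * β * c ^ r := by rw [hrel]
    · obtain ⟨m0, rfl⟩ : ∃ m0, m = m0 + 1 := ⟨m - 1, by omega⟩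
      set u := buildT a b n k κ c m0 with hudef
      have hagree : ∀ i ≤ m0 + 1, PowerSeries.coeff i s = PowerSeries.coeff i u :=
        fun i hi => hsT m0 i hi
      have hu0 : PowerSeries.constantCoeff u = 0 := by
        rw [← PowerSeries.coeff_zero_eq_constantCoeff_apply, ← hagree 0 (by omega),
          PowerSeries.coeff_zero_eq_constantCoeff_apply, hs0]
      have hΔu : PowerSeries.coeff (m0 + 1 + 1) u = 0 :=
        buildT_coeff_high a b n k κ c m0 (m0 + 2) (by omega)
      have hrels : (k : L) * α * (PowerSeries.coeff 1 s) ^ n = (n : L) * β := by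
        rw [hs1]; exact hrel
      have hED := keyED s u hs0 hu0 hrels (m0 + 1) (by omega) hagree
      rw [hΔu, sub_zero, hs1] at hED
      have hsm : PowerSeries.coeff (m0 + 1 + 1) s =
          -(PowerSeries.coeff (k + m0) (psdefect a b n u)) /
            (κ * ((n : L) + (m0 : L) + 1)) := by
        rw [show m0 + 1 + 1 = m0 + 2 from rfl, hsT (m0 + 1) (m0 + 2) le_rfl, hTop m0]
      have hden : κ * ((n : L) + (m0 : L) + 1) ≠ 0 := by
        have : ((n + m0 + 1 : ℕ) : L) ≠ 0 := Nat.cast_ne_zero.2 (by omega)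
        push_cast at this
        exact mul_ne_zero hκ0 this
      have hδ : PowerSeries.coeff (m0 + 1 + 1) s * (κ * ((n : L) + (m0 : L) + 1)) =
          -(PowerSeries.coeff (k + m0) (psdefect a b n u)) := (eq_div_iff hden).1 hsm
      have hkm : k - 1 + (m0 + 1) = k + m0 := by omega
      rw [hkm] at hED ⊢
      have hK : (k : L) * α * c ^ (k - 1) * ((n : L) + ((m0 : ℕ) + 1 : ℕ)) =
          κ * ((n : L) + (m0 : L) + 1) := by
        rw [hκ]
        push_cast
        ring
      rw [sub_eq_iff_eq_add] at hED
      rw [hED]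
      push_cast at hK ⊢
      rw [hK]
      linear_combination hδ
  -- the set of roots and the counting
  set Rset : Set L := {c : L | (k : L) * α * c ^ n = (n : L) * β} with hRset
  have hSmem : ∀ s : PowerSeries L,
      s ∈ {s : PowerSeries L |
        PowerSeries.constantCoeff s = 0 ∧ PowerSeries.coeff 1 s ≠ 0 ∧
        pscomp a.derivativeFun s * s.derivativeFun =
          (n : PowerSeries L) * PowerSeries.X ^ (n - 1) * pscomp b s} ↔
      (PowerSeries.constantCoeff s = 0 ∧ PowerSeries.coeff 1 s ≠ 0 ∧
        psdefect a b n s = 0) := by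
    intro s
    simp only [Set.mem_setOf_eq, psdefect, sub_eq_zero]
  have hinj : Set.InjOn (fun s => PowerSeries.coeff 1 s)
      {s : PowerSeries L |
        PowerSeries.constantCoeff s = 0 ∧ PowerSeries.coeff 1 s ≠ 0 ∧
        pscomp a.derivativeFun s * s.derivativeFun =
          (n : PowerSeries L) * PowerSeries.X ^ (n - 1) * pscomp b s} := by
    intro s hsS u huS h
    obtain ⟨hs0, hs1, hsd⟩ := (hSmem s).1 hsS
    obtain ⟨hu0, hu1, hud⟩ := (hSmem u).1 huS
    exact huniq s u hs0 hs1 hsd hu0 hu1 hud h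
  have himg : (fun s => PowerSeries.coeff 1 s) ''
      {s : PowerSeries L |
        PowerSeries.constantCoeff s = 0 ∧ PowerSeries.coeff 1 s ≠ 0 ∧
        pscomp a.derivativeFun s * s.derivativeFun =
          (n : PowerSeries L) * PowerSeries.X ^ (n - 1) * pscomp b s} = Rset := by
    ext c
    constructor
    · rintro ⟨s, hsS, rfl⟩
      obtain ⟨hs0, hs1, hsd⟩ := (hSmem s).1 hsS
      exact hroot s hs0 hs1 hsd
    · intro hc
      obtain ⟨s, hs0, hs1, hsd, hceq⟩ := hexist c hc
      exact ⟨s, (hSmem s).2 ⟨hs0, hs1, hsd⟩, hceq⟩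
  rw [← Set.ncard_image_of_injOn hinj, himg]
  -- count the roots
  have hkαne : (k : L) * α ≠ 0 := mul_ne_zero knz hαne
  set e : L := (n : L) * β / ((k : L) * α) with he
  have hene : e ≠ 0 := div_ne_zero (mul_ne_zero nnz hβne) hkαne
  have hRe : Rset = (Polynomial.X ^ n - Polynomial.C e).rootSet L := by
    ext c
    rw [Polynomial.mem_rootSet]
    simp only [hRset, Set.mem_setOf_eq, map_sub, map_pow, Polynomial.aeval_X,
      Polynomial.aeval_C, sub_eq_zero, Algebra.algebraMap_self_apply]
    constructor
    · intro h
      refine ⟨Polynomial.X_pow_sub_C_ne_zero hnpos e, ?_⟩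
      rw [eq_div_iff hkαne]
      linear_combination h
    · rintro ⟨-, h⟩
      rw [eq_div_iff hkαne] at h
      linear_combination h
  rw [hRe, Set.ncard_eq_toFinset_card', Set.toFinset_card,
    Polynomial.card_rootSet_eq_natDegree
      (Polynomial.separable_X_pow_sub_C e nnz hene)
      (IsAlgClosed.splits _),
    Polynomial.natDegree_X_pow_sub_C]
end
end

section
/- Let G(x,y) ∈ K[x,y] with deg_y G = d_y, and let y(x) = ȳ(x) + φ(x) be a Puiseux series with G(x, y(x)) = 0, ord_x(ȳ(x)) = ν' ≤ 0 and ord_x(φ(x)) > N > 0. Then ord_x(G(x, ȳ(x))) > ν'·(d_y − 1) + N. -/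
noncomputable section
open HahnSeries

variable {L : Type*} [Field L]

/-- formal derivative of a Laurent series -/
def lderiv (f : LaurentSeries L) : LaurentSeries L :=
  { coeff := fun n => (n + 1 : ℤ) • f.coeff (n + 1)
    isPWO_support' := by
      apply Set.IsPWO.mono (Set.IsPWO.image_of_monotone f.isPWO_support
        (f := fun n => n - 1) (fun a b h => by simpa using h))
      intro n hn
      refine ⟨n + 1, ?_, by simp⟩
      simp only [Function.mem_support] at hn ⊢
      exact fun h => hn (by rw [h]; simp) }

/-- A Puiseux series `y(x) = Y(x^{1/n})` is represented by a Laurent series `Y`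
in the variable `t = x^{1/n}`.  Its derivative `dy/dx`, re-expanded in `t`, is
`Y'(t)/(n t^{n-1})`. -/
def bOf (n : ℕ) (Y : LaurentSeries L) : LaurentSeries L :=
  HahnSeries.single (1 - (n : ℤ)) ((n : L)⁻¹) * lderiv Y




/-- `OrdGE a f` : all coefficients of index `< a` vanish, i.e. `ord f ≥ a`. -/
private def OrdGE (a : ℚ) (f : LaurentSeries L) : Prop :=
  ∀ j : ℤ, (j : ℚ) < a → f.coeff j = 0

/-- `OrdGT a f` : all coefficients of index `≤ a` vanish, i.e. `ord f > a`. -/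
private def OrdGT (a : ℚ) (f : LaurentSeries L) : Prop :=
  ∀ j : ℤ, (j : ℚ) ≤ a → f.coeff j = 0

private lemma OrdGE.mono {a b : ℚ} {f : LaurentSeries L} (h : OrdGE a f) (hba : b ≤ a) :
    OrdGE b f := fun j hj => h j (lt_of_lt_of_le hj hba)

private lemma OrdGT.mono {a b : ℚ} {f : LaurentSeries L} (h : OrdGT a f) (hba : b ≤ a) :
    OrdGT b f := fun j hj => h j (le_trans hj hba)

private lemma OrdGE.add {a : ℚ} {f g : LaurentSeries L} (hf : OrdGE a f) (hg : OrdGE a g) :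
    OrdGE a (f + g) := fun j hj => by
  rw [HahnSeries.coeff_add, hf j hj, hg j hj, add_zero]

private lemma OrdGE.mul {a b : ℚ} {f g : LaurentSeries L} (hf : OrdGE a f) (hg : OrdGE b g) :
    OrdGE (a + b) (f * g) := by
  intro j hj
  rw [HahnSeries.coeff_mul]
  apply Finset.sum_eq_zero
  rintro ⟨j1, j2⟩ hmem
  rw [Finset.mem_addAntidiagonal] at hmem
  have hsum : (j1 : ℚ) + (j2 : ℚ) = (j : ℚ) := by exact_mod_cast congrArg (fun z : ℤ => (z : ℚ)) hmem.2.2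
  by_cases h1 : (j1 : ℚ) < a
  · rw [hf j1 h1, zero_mul]
  · have : (j2 : ℚ) < b := by push_neg at h1; linarith
    rw [hg j2 this, mul_zero]

private lemma OrdGE.mul_ordGT {a b : ℚ} {f g : LaurentSeries L}
    (hf : OrdGE a f) (hg : OrdGT b g) : OrdGT (a + b) (f * g) := by
  intro j hj
  rw [HahnSeries.coeff_mul]
  apply Finset.sum_eq_zero
  rintro ⟨j1, j2⟩ hmem
  rw [Finset.mem_addAntidiagonal] at hmem
  have hsum : (j1 : ℚ) + (j2 : ℚ) = (j : ℚ) := by exact_mod_cast congrArg (fun z : ℤ => (z : ℚ)) hmem.2.2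
  by_cases h1 : (j1 : ℚ) < a
  · rw [hf j1 h1, zero_mul]
  · have : (j2 : ℚ) ≤ b := by push_neg at h1; linarith
    rw [hg j2 this, mul_zero]

private lemma ordGE_one : OrdGE 0 (1 : LaurentSeries L) := by
  intro j hj
  have : j ≠ (0 : ℤ) := by exact_mod_cast hj.ne
  simp [HahnSeries.coeff_one, this]

private lemma OrdGE.pow {a : ℚ} {f : LaurentSeries L} (hf : OrdGE a f) (k : ℕ) :
    OrdGE ((k : ℚ) * a) (f ^ k) := by
  induction k with
  | zero => simpa using ordGE_one
  | succ k ih =>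
      have := ih.mul hf
      rw [← pow_succ] at this
      refine this.mono (le_of_eq ?_)
      push_cast
      ring

private lemma ordGE_sum {a : ℚ} {ι : Type*} (s : Finset ι) (F : ι → LaurentSeries L)
    (h : ∀ i ∈ s, OrdGE a (F i)) : OrdGE a (∑ i ∈ s, F i) := by
  classical
  refine Finset.sum_induction F (OrdGE a) (fun f g hf hg => hf.add hg) ?_ h
  intro j hj; simp

private lemma ordGT_sum {a : ℚ} {ι : Type*} (s : Finset ι) (F : ι → LaurentSeries L)
    (h : ∀ i ∈ s, OrdGT a (F i)) : OrdGT a (∑ i ∈ s, F i) := by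
  classical
  refine Finset.sum_induction F (OrdGT a) ?_ ?_ h
  · intro f g hf hg j hj
    rw [HahnSeries.coeff_add, hf j hj, hg j hj, add_zero]
  · intro j hj; simp

/-- **Order bound for the evaluation at a truncation.**
Let `G ∈ K[x,y]` (variables `0 = x`, `1 = y`) with `deg_y G = d_y`, and let
`y(x) = ȳ(x) + φ(x)` be a Puiseux series with `G(x, y(x)) = 0`,
`ord_x(ȳ) = ν' ≤ 0` and `ord_x(φ) > N > 0`.  Then
`ord_x(G(x, ȳ(x))) > ν'·(d_y − 1) + N`.  (Puiseux series in `x` are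
represented by Laurent series in `t = x^{1/n}`, so `ord_x = ord_t / n`, and an
order bound `ord_x(f) > β` reads: all coefficients of index `j ≤ n·β`
vanish.) -/
theorem order_bound_at_truncation
    (K : Type*) [Field K] [CharZero K]
    (G : MvPolynomial (Fin 2) K) (dy : ℕ) (hdy : dy = MvPolynomial.degreeOf 1 G)
    (n : ℕ) (hn : 0 < n)
    (Y Ybar : LaurentSeries (AlgebraicClosure K))
    (hsol : MvPolynomial.aeval
      ![(HahnSeries.single (n : ℤ) 1 : LaurentSeries (AlgebraicClosure K)), Y] G = 0)
    (ν' N : ℚ) (hν'0 : ν' ≤ 0) (hNpos : 0 < N)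
    (hYbar : Ybar ≠ 0) (hord : (Ybar.order : ℚ) = n * ν')
    (hφ : ∀ j : ℤ, (j : ℚ) ≤ N * n → (Y - Ybar).coeff j = 0) :
    ∀ j : ℤ, (j : ℚ) ≤ n * (ν' * (dy - 1) + N) →
      (MvPolynomial.aeval
        ![(HahnSeries.single (n : ℤ) 1 : LaurentSeries (AlgebraicClosure K)), Ybar]
        G).coeff j = 0 := by
  classical
  set F := AlgebraicClosure K
  set x : LaurentSeries F := HahnSeries.single (n : ℤ) 1 with hxdef
  set φ : LaurentSeries F := Y - Ybar with hφdef
  set M : ℤ := Ybar.order with hMdef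
  have hnQ : (0 : ℚ) < (n : ℚ) := by exact_mod_cast hn
  have hMle : (M : ℚ) ≤ 0 := by
    rw [hord]; exact mul_nonpos_of_nonneg_of_nonpos (le_of_lt hnQ) hν'0
  have hNn : (0 : ℚ) < N * n := mul_pos hNpos hnQ
  -- basic order facts
  have hYbarGE : OrdGE (M : ℚ) Ybar := by
    intro i hi
    exact HahnSeries.coeff_eq_zero_of_lt_order (by exact_mod_cast hi)
  have hφGT : OrdGT (N * n) φ := hφ
  have hYGE : OrdGE (M : ℚ) Y := by
    intro i hi
    have hY : Y = Ybar + φ := by rw [hφdef]; ring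
    rw [hY, HahnSeries.coeff_add, hYbarGE i hi,
      hφGT i (le_of_lt (lt_of_lt_of_le (lt_of_lt_of_le hi hMle) hNn.le)), add_zero]
  have hxGE : OrdGE 0 x := by
    intro i hi
    refine HahnSeries.coeff_single_of_ne ?_
    intro h; rw [h] at hi
    have h0 : (0:ℚ) ≤ ((n:ℤ) : ℚ) := by positivity
    linarith
  have hCGE : ∀ c : K, OrdGE 0 ((algebraMap K (LaurentSeries F)) c) := by
    intro c i hi
    rw [HahnSeries.algebraMap_apply', PowerSeries.algebraMap_apply,
      HahnSeries.ofPowerSeries_C, HahnSeries.C_apply]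
    refine HahnSeries.coeff_single_of_ne ?_
    intro h; rw [h] at hi; simp at hi
  -- the target threshold
  set T : ℚ := n * (ν' * (dy - 1) + N) with hTdef
  have hT : T = (M : ℚ) * ((dy : ℚ) - 1) + N * (n : ℚ) := by
    rw [hTdef, hord]; ring
  -- main claim: OrdGT T of the evaluation at Ybar
  suffices hmain : OrdGT T (MvPolynomial.aeval ![x, Ybar] G) by
    intro j hj; exact hmain j hj
  have key : (MvPolynomial.aeval ![x, Ybar] G)
      = (MvPolynomial.aeval ![x, Ybar] G) - (MvPolynomial.aeval ![x, Y] G) := by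
    rw [hsol, sub_zero]
  rw [key, MvPolynomial.aeval_def, MvPolynomial.aeval_def,
    MvPolynomial.eval₂_eq' (algebraMap K (LaurentSeries F)) ![x, Ybar] G,
    MvPolynomial.eval₂_eq' (algebraMap K (LaurentSeries F)) ![x, Y] G,
    ← Finset.sum_sub_distrib]
  apply ordGT_sum
  intro d hd
  -- simplify the products over `Fin 2`
  have hprod1 : (∏ i, (![x, Ybar] : Fin 2 → LaurentSeries F) i ^ d i)
      = x ^ d 0 * Ybar ^ d 1 := by
    rw [Fin.prod_univ_two]; simp
  have hprod2 : (∏ i, (![x, Y] : Fin 2 → LaurentSeries F) i ^ d i)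
      = x ^ d 0 * Y ^ d 1 := by
    rw [Fin.prod_univ_two]; simp
  rw [hprod1, hprod2]
  set c := (algebraMap K (LaurentSeries F)) (MvPolynomial.coeff d G) with hc
  set a := d 0
  set b := d 1
  have hbdy : b ≤ dy := by
    rw [hdy, MvPolynomial.degreeOf_eq_sup]
    exact Finset.le_sup (f := fun m => m 1) hd
  have hfactor : c * (x ^ a * Ybar ^ b) - c * (x ^ a * Y ^ b)
      = c * (x ^ a * ((∑ i ∈ Finset.range b, Ybar ^ i * Y ^ (b - 1 - i)) * (-φ))) := by
    have := geom_sum₂_mul Ybar Y b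
    rw [show Ybar - Y = -φ by rw [hφdef]; ring] at this
    rw [this]
    ring
  rw [hfactor]
  rcases Nat.eq_zero_or_pos b with hb0 | hbpos
  · rw [hb0]
    simp only [Finset.range_zero, Finset.sum_empty, zero_mul, mul_zero]
    intro i _; simp
  · have hdypos : 1 ≤ dy := le_trans hbpos hbdy
    -- geometric sum has order ≥ M*(dy-1)
    have hS : OrdGE ((M : ℚ) * ((dy : ℚ) - 1))
        (∑ i ∈ Finset.range b, Ybar ^ i * Y ^ (b - 1 - i)) := by
      apply ordGE_sum
      intro i hi
      rw [Finset.mem_range] at hi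
      have h1 : OrdGE ((i : ℚ) * (M : ℚ)) (Ybar ^ i) := hYbarGE.pow i
      have h2 : OrdGE (((b - 1 - i : ℕ) : ℚ) * (M : ℚ)) (Y ^ (b - 1 - i)) :=
        hYGE.pow (b - 1 - i)
      refine (h1.mul h2).mono ?_
      have hsum : i + (b - 1 - i) = b - 1 := by omega
      have hcast : ((i : ℚ)) + ((b - 1 - i : ℕ) : ℚ) = ((b - 1 : ℕ) : ℚ) := by
        exact_mod_cast congrArg (fun z : ℕ => (z : ℚ)) hsum
      have hb1 : ((b - 1 : ℕ) : ℚ) = (b : ℚ) - 1 := by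
        have : (1 : ℕ) ≤ b := hbpos
        push_cast [Nat.cast_sub this]; ring
      have hbledy : ((b : ℚ)) ≤ (dy : ℚ) := by exact_mod_cast hbdy
      nlinarith [hMle]
    have hterm : OrdGT (0 + (0 + ((M : ℚ) * ((dy : ℚ) - 1) + N * n)))
        (c * (x ^ a * ((∑ i ∈ Finset.range b, Ybar ^ i * Y ^ (b - 1 - i)) * (-φ)))) := by
      have hnegφ : OrdGT (N * n) (-φ) := by
        intro i hi; rw [HahnSeries.coeff_neg, hφGT i hi, neg_zero]
      have hxa : OrdGE 0 (x ^ a) := by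
        have := hxGE.pow a; simpa using this
      exact (hCGE _).mul_ordGT (hxa.mul_ordGT (hS.mul_ordGT hnegφ))
    refine hterm.mono ?_
    rw [hT]; linarith
end
end

section
/- The map Δ sending a non-constant formal Puiseux series solution y(x) of F(y, y') = 0 with ramification order n and initial value y(0) = y₀ ∈ K̄ to the pair (y(tⁿ), (dy/dx)(tⁿ)) is injective, and its image consists of irreducible formal parametrizations of the curve F(y, p) = 0: that is, the pair (a(t), b(t)) = Δ(y) satisfies F(a(t), b(t)) = 0 and is not of the form (ã(t^m), b̃(t^m)) for any m > 1. -/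
noncomputable section
open HahnSeries

variable {L : Type*} [Field L]

lemma lderiv_coeff (f : LaurentSeries L) (k : ℤ) :
    (lderiv f).coeff k = (k + 1 : ℤ) • f.coeff (k + 1) := rfl

lemma exists_nonzero_coeff {Y : LaurentSeries L}
    (h : ¬ ∃ c : L, Y = HahnSeries.C c) : ∃ j : ℤ, j ≠ 0 ∧ Y.coeff j ≠ 0 := by
  by_contra hc
  push_neg at hc
  refine h ⟨Y.coeff 0, ?_⟩
  ext j
  rcases eq_or_ne j 0 with rfl | hj
  · simp [HahnSeries.C_apply, HahnSeries.coeff_single_same]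
  · simp [hc j hj, HahnSeries.C_apply, HahnSeries.coeff_single_of_ne hj]

lemma bOf_coeff [CharZero L] (n : ℕ) (Y : LaurentSeries L) (j : ℤ) :
    (bOf n Y).coeff (j - n) = (n : L)⁻¹ * ((j : L) * Y.coeff j) := by
  have h : (j - n : ℤ) = (j - 1) + (1 - (n : ℤ)) := by ring
  rw [bOf, h, HahnSeries.coeff_single_mul_add, lderiv_coeff]
  rw [sub_add_cancel, zsmul_eq_mul]

lemma lderiv_ne_zero [CharZero L] {Y : LaurentSeries L} {j : ℤ} (hj : j ≠ 0)
    (hc : Y.coeff j ≠ 0) : lderiv Y ≠ 0 := by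
  intro h0
  have h := lderiv_coeff Y (j - 1)
  rw [h0, sub_add_cancel] at h
  simp only [HahnSeries.coeff_zero, zsmul_eq_mul] at h
  have hj' : (j : L) ≠ 0 := Int.cast_ne_zero.mpr hj
  rcases mul_eq_zero.mp h.symm with h' | h'
  · exact hj' h'
  · exact hc h'

/-- `Y` (a Laurent series in `t = x^{1/n}`) represents a non-constant formal
Puiseux series solution `y(x) = Y(x^{1/n})` of `F(y, y') = 0` with `y(0)` finite
and with ramification order exactly `n` (minimality: no `d > 1` dividing `n`
divides every exponent of `Y`). -/
def IsPuiseuxSolutionRep {K : Type*} [Field K]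
    (F : MvPolynomial (Fin 2) K) (n : ℕ) (Y : LaurentSeries (AlgebraicClosure K)) : Prop :=
  0 < n ∧
  MvPolynomial.aeval ![Y, bOf n Y] F = 0 ∧
  (∀ j : ℤ, j < 0 → Y.coeff j = 0) ∧
  (¬ ∃ c : AlgebraicClosure K, Y = HahnSeries.C c) ∧
  (∀ d : ℕ, 1 < d → (d : ℤ) ∣ n → ¬ ∀ j ∈ Y.support, (d : ℤ) ∣ j)

/-- **`Δ` is injective and its image consists of irreducible formal
parametrizations.**  The map `Δ` sends a non-constant Puiseux series solution
`y(x)` of `F(y, y') = 0` with ramification order `n` and finite initial value —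
represented by the Laurent series `Y` in `t = x^{1/n}` — to the pair
`(a(t), b(t)) = (y(tⁿ), (dy/dx)(tⁿ)) = (Y, bOf n Y)`.  Then `Δ` is injective,
and each `Δ`-image `(a, b)` satisfies `F(a(t), b(t)) = 0` and is not of the
form `(ã(t^m), b̃(t^m))` for any `m > 1`. -/
theorem Delta_injective_image_irreducible
    (K : Type*) [Field K] [CharZero K]
    (F : MvPolynomial (Fin 2) K) :
    (∀ (n₁ n₂ : ℕ) (Y₁ Y₂ : LaurentSeries (AlgebraicClosure K)),
      IsPuiseuxSolutionRep F n₁ Y₁ → IsPuiseuxSolutionRep F n₂ Y₂ →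
      Y₁ = Y₂ → bOf n₁ Y₁ = bOf n₂ Y₂ → n₁ = n₂ ∧ Y₁ = Y₂) ∧
    (∀ (n : ℕ) (Y : LaurentSeries (AlgebraicClosure K)),
      IsPuiseuxSolutionRep F n Y →
      MvPolynomial.aeval ![Y, bOf n Y] F = 0 ∧
      ¬ ∃ m : ℕ, 1 < m ∧ (∀ j ∈ Y.support, (m : ℤ) ∣ j) ∧
        (∀ j ∈ (bOf n Y).support, (m : ℤ) ∣ j)) := by
  constructor
  · rintro n₁ n₂ Y₁ Y₂ h₁ h₂ rfl hb
    refine ⟨?_, rfl⟩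
    obtain ⟨hn₁, -, -, hnc, -⟩ := h₁
    obtain ⟨hn₂, -, -, -, -⟩ := h₂
    obtain ⟨j, hj, hcj⟩ := exists_nonzero_coeff hnc
    have hD : lderiv Y₁ ≠ 0 := lderiv_ne_zero hj hcj
    have hcancel : (HahnSeries.single (1 - (n₁ : ℤ)) ((n₁ : AlgebraicClosure K)⁻¹) :
        LaurentSeries (AlgebraicClosure K)) =
        HahnSeries.single (1 - (n₂ : ℤ)) ((n₂ : AlgebraicClosure K)⁻¹) :=
      mul_right_cancel₀ hD hb
    have h1 : ((HahnSeries.single (1 - (n₁ : ℤ)) ((n₁ : AlgebraicClosure K)⁻¹) :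
        LaurentSeries (AlgebraicClosure K))).coeff (1 - (n₁ : ℤ)) ≠ 0 := by
      rw [HahnSeries.coeff_single_same]
      exact inv_ne_zero (Nat.cast_ne_zero.mpr hn₁.ne')
    rw [hcancel] at h1
    by_contra hne
    have hne' : (1 - (n₁ : ℤ)) ≠ (1 - (n₂ : ℤ)) := by
      simp only [ne_eq, sub_right_injective.eq_iff]
      exact_mod_cast fun h => hne (by exact_mod_cast h)
    rw [HahnSeries.coeff_single_of_ne hne'] at h1
    exact h1 rfl
  · rintro n Y ⟨hn, hF, -, hnc, hmin⟩
    refine ⟨hF, ?_⟩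
    rintro ⟨m, hm, hYd, hBd⟩
    obtain ⟨j, hj, hcj⟩ := exists_nonzero_coeff hnc
    have hjY : j ∈ Y.support := hcj
    have hbc : (bOf n Y).coeff (j - n) ≠ 0 := by
      rw [bOf_coeff]
      have h1 : ((n : AlgebraicClosure K))⁻¹ ≠ 0 :=
        inv_ne_zero (Nat.cast_ne_zero.mpr hn.ne')
      have h2 : (j : AlgebraicClosure K) ≠ 0 := Int.cast_ne_zero.mpr hj
      exact mul_ne_zero h1 (mul_ne_zero h2 hcj)
    have hmn : (m : ℤ) ∣ (n : ℤ) := by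
      have d1 : (m : ℤ) ∣ j := hYd j hjY
      have d2 : (m : ℤ) ∣ (j - n) := hBd _ hbc
      have h3 := dvd_sub d1 d2
      simpa using h3
    exact hmin m hm hmn hYd
end
end

section
/- Suppose y₁(x) and y₂(x) are two formal Puiseux series solutions of F(y, y') = 0 lying in the same place of the curve F(y,p) = 0, i.e., their associated parametrizations Δ(y₁) and Δ(y₂) are related by reparametrization by an order-one formal power series. Then y₁ and y₂ have the same ramification order. -/
noncomputable section
open HahnSeries

variable {L : Type*} [Field L]

/-- composition `f(s(t))` of a Laurent series `f` with a power series `s` of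
order one, via `f = t^{ord f} · (power series part of f)`. -/
def lcomp (f : LaurentSeries L) (s : PowerSeries L) : LaurentSeries L :=
  (HahnSeries.ofPowerSeries ℤ L s) ^ f.order *
    HahnSeries.ofPowerSeries ℤ L (pscomp f.powerSeriesPart s)

section basic

lemma order_eq_of_forall {f : LaurentSeries L} {m : ℤ}
    (h0 : f.coeff m ≠ 0) (h1 : ∀ j < m, f.coeff j = 0) : f.order = m := by
  have hf : f ≠ 0 := fun h => h0 (by simp [h])
  have h2 := HahnSeries.order_le_of_coeff_ne_zero h0
  rcases lt_or_eq_of_le h2 with h | h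
  · exact absurd (h1 _ h) ((HahnSeries.coeff_order_eq_zero.not.mpr hf))
  · exact h

lemma order_pow (x : LaurentSeries L) (hx : x ≠ 0) (k : ℕ) :
    (x ^ k).order = k * x.order := by
  induction k with
  | zero => simp [HahnSeries.order_one]
  | succ n ih =>
    rw [pow_succ, HahnSeries.order_mul (pow_ne_zero _ hx) hx, ih]
    push_cast; ring

lemma order_inv (x : LaurentSeries L) (hx : x ≠ 0) : (x⁻¹).order = -x.order := by
  have h : (x * x⁻¹).order = 0 := by rw [mul_inv_cancel₀ hx, HahnSeries.order_one]
  rw [HahnSeries.order_mul hx (inv_ne_zero hx)] at h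
  linarith

lemma order_zpow (x : LaurentSeries L) (hx : x ≠ 0) (z : ℤ) :
    (x ^ z).order = z * x.order := by
  cases z with
  | ofNat n =>
    rw [Int.ofNat_eq_coe, zpow_natCast, order_pow _ hx]
  | negSucc n =>
    rw [zpow_negSucc, order_inv _ (pow_ne_zero _ hx), order_pow _ hx]
    push_cast [Int.negSucc_eq]; ring

end basic
section comp
variable {s : PowerSeries L}

lemma coeff_pow_eq_zero (hs0 : PowerSeries.constantCoeff s = 0)
    {j k : ℕ} (h : j < k) : PowerSeries.coeff j (s ^ k) = 0 := by
  have hdvd : (PowerSeries.X : PowerSeries L) ^ k ∣ s ^ k :=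
    pow_dvd_pow_of_dvd (PowerSeries.X_dvd_iff.mpr hs0) k
  exact (PowerSeries.X_pow_dvd_iff.mp hdvd) j h

lemma coeff_pow_self_s14 (hs0 : PowerSeries.constantCoeff s = 0) (k : ℕ) :
    PowerSeries.coeff k (s ^ k) = (PowerSeries.coeff 1 s) ^ k := by
  obtain ⟨r, hr⟩ := PowerSeries.X_dvd_iff.mpr hs0
  have h1 : PowerSeries.coeff 1 s = PowerSeries.constantCoeff r := by
    rw [hr]; simp [PowerSeries.coeff_succ_X_mul]
  conv_lhs => rw [hr, mul_pow]
  have h2 : PowerSeries.coeff k (PowerSeries.X ^ k * r ^ k)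
      = PowerSeries.coeff 0 (r ^ k) := by
    simpa using PowerSeries.coeff_X_pow_mul (r ^ k) k 0
  rw [h2, h1, PowerSeries.coeff_zero_eq_constantCoeff, map_pow]

lemma pscomp_coeff_zero (f : PowerSeries L) :
    PowerSeries.coeff 0 (pscomp f s) = PowerSeries.coeff 0 f := by
  simp [pscomp]

lemma pscomp_coeff_lt (f : PowerSeries L) (hs0 : PowerSeries.constantCoeff s = 0)
    {m : ℕ} (hm : 0 < m) (hf : ∀ k : ℕ, 0 < k → k < m → PowerSeries.coeff k f = 0)
    {j : ℕ} (hj : 0 < j) (hjm : j < m) : PowerSeries.coeff j (pscomp f s) = 0 := by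
  rw [pscomp, PowerSeries.coeff_mk]
  apply Finset.sum_eq_zero
  intro k hk
  rcases Nat.eq_zero_or_pos k with h0 | h0
  · subst h0; simp [PowerSeries.coeff_one, hj.ne']
  rcases lt_or_ge j k with h | h
  · rw [coeff_pow_eq_zero hs0 h, mul_zero]
  · rw [hf k h0 (lt_of_le_of_lt h hjm), zero_mul]

lemma pscomp_coeff_min (f : PowerSeries L) (hs0 : PowerSeries.constantCoeff s = 0)
    {m : ℕ} (hm : 0 < m) (hf : ∀ k : ℕ, 0 < k → k < m → PowerSeries.coeff k f = 0) :
    PowerSeries.coeff m (pscomp f s) =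
      PowerSeries.coeff m f * (PowerSeries.coeff 1 s) ^ m := by
  rw [pscomp, PowerSeries.coeff_mk]
  rw [Finset.sum_eq_single m]
  · rw [coeff_pow_self_s14 hs0]
  · intro k hk hkm
    rcases Nat.eq_zero_or_pos k with h0 | h0
    · subst h0; simp [PowerSeries.coeff_one, hm.ne']
    rcases lt_or_ge m k with h | h
    · rw [coeff_pow_eq_zero hs0 h, mul_zero]
    · rw [hf k h0 (lt_of_le_of_ne h hkm), zero_mul]
  · intro h; exact absurd (Finset.self_mem_range_succ m) h

end comp



section hahn
variable {s : PowerSeries L}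

lemma ofPS_coeff_neg (g : PowerSeries L) {j : ℤ} (hj : j < 0) :
    (HahnSeries.ofPowerSeries ℤ L g).coeff j = 0 := by
  rw [HahnSeries.ofPowerSeries_apply, HahnSeries.embDomain_notin_range]
  intro h
  simp only [Set.mem_range, RelEmbedding.coe_mk, Function.Embedding.coeFn_mk, Nat.castOrderEmbedding_apply] at h
  obtain ⟨m, hm⟩ := h
  omega

lemma order_ofPS (hs0 : PowerSeries.constantCoeff s = 0)
    (hs1 : PowerSeries.coeff 1 s ≠ 0) :
    (HahnSeries.ofPowerSeries ℤ L s).order = 1 := by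
  apply order_eq_of_forall
  · rw [show ((1:ℤ)) = ((1:ℕ):ℤ) by norm_num, HahnSeries.ofPowerSeries_apply_coeff]
    exact hs1
  · intro j hj
    rcases lt_or_ge j 0 with h | h
    · exact ofPS_coeff_neg s h
    · have : j = 0 := by omega
      subst this
      rw [show ((0:ℤ)) = ((0:ℕ):ℤ) by norm_num, HahnSeries.ofPowerSeries_apply_coeff]
      simpa using hs0

lemma lcomp_ne_zero_and_order (f : LaurentSeries L) (hf : f ≠ 0)
    (hs0 : PowerSeries.constantCoeff s = 0)
    (hs1 : PowerSeries.coeff 1 s ≠ 0) :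
    lcomp f s ≠ 0 ∧ (lcomp f s).order = f.order := by
  set g := pscomp f.powerSeriesPart s with hg
  have hgc : PowerSeries.coeff 0 g = PowerSeries.coeff 0 f.powerSeriesPart :=
    pscomp_coeff_zero _
  have hg0 : (HahnSeries.ofPowerSeries ℤ L g).coeff (0:ℤ) ≠ 0 := by
    rw [show ((0:ℤ)) = ((0:ℕ):ℤ) by norm_num, HahnSeries.ofPowerSeries_apply_coeff, hgc,
      LaurentSeries.powerSeriesPart_coeff]
    simpa using (HahnSeries.coeff_order_eq_zero.not.mpr hf)
  have hgne : HahnSeries.ofPowerSeries ℤ L g ≠ 0 := fun h => hg0 (by simp [h])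
  have hgo : (HahnSeries.ofPowerSeries ℤ L g).order = 0 := by
    apply order_eq_of_forall hg0
    intro j hj
    exact ofPS_coeff_neg g hj
  have hsne : HahnSeries.ofPowerSeries ℤ L s ≠ 0 := by
    intro h
    apply hs1
    rw [← HahnSeries.ofPowerSeries_apply_coeff (Γ := ℤ) s 1, h]
    simp
  have hzp : (HahnSeries.ofPowerSeries ℤ L s) ^ f.order ≠ 0 := zpow_ne_zero _ hsne
  constructor
  · exact mul_ne_zero hzp hgne
  · rw [lcomp, HahnSeries.order_mul hzp hgne, hgo,
      order_zpow _ hsne, order_ofPS hs0 hs1]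
    ring

/-- minimal positive support element -/
lemma exists_min_pos_support (Y : LaurentSeries L)
    (hneg : ∀ j : ℤ, j < 0 → Y.coeff j = 0)
    (hnc : ¬ ∃ c : L, Y = HahnSeries.C c) :
    ∃ m : ℤ, 0 < m ∧ Y.coeff m ≠ 0 ∧ ∀ j : ℤ, 0 < j → j < m → Y.coeff j = 0 := by
  have hne : ∃ j : ℤ, 0 < j ∧ Y.coeff j ≠ 0 := by
    by_contra h
    push_neg at h
    apply hnc
    refine ⟨Y.coeff 0, ?_⟩
    ext j
    rcases lt_trichotomy j 0 with hj | hj | hj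
    · rw [hneg j hj, HahnSeries.C_apply, HahnSeries.coeff_single_of_ne hj.ne]
    · subst hj; rw [HahnSeries.C_apply, HahnSeries.coeff_single_same]
    · rw [h j hj, HahnSeries.C_apply, HahnSeries.coeff_single_of_ne hj.ne']
  obtain ⟨j₀, hj₀, hj₀'⟩ := hne
  obtain ⟨m, ⟨hm1, hm2⟩, hmin⟩ := Int.exists_least_of_bdd
    (P := fun j => 0 < j ∧ Y.coeff j ≠ 0) ⟨0, fun z hz => hz.1.le⟩ ⟨j₀, hj₀, hj₀'⟩
  refine ⟨m, hm1, hm2, fun j hj hjm => ?_⟩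
  by_contra hc
  exact absurd (hmin j ⟨hj, hc⟩) (by omega)

lemma order_lderiv [CharZero L] (Y : LaurentSeries L)
    (hneg : ∀ j : ℤ, j < 0 → Y.coeff j = 0)
    {m : ℤ} (hm : 0 < m) (hc : Y.coeff m ≠ 0)
    (hmin : ∀ j : ℤ, 0 < j → j < m → Y.coeff j = 0) :
    lderiv Y ≠ 0 ∧ (lderiv Y).order = m - 1 := by
  have hco : (lderiv Y).coeff (m - 1) ≠ 0 := by
    show ((m - 1 + 1 : ℤ)) • Y.coeff (m - 1 + 1) ≠ 0
    rw [sub_add_cancel, zsmul_eq_mul]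
    exact mul_ne_zero (by exact_mod_cast fun h => hm.ne' (by exact_mod_cast h)) hc
  have hne : lderiv Y ≠ 0 := fun h => hco (by simp [h])
  refine ⟨hne, order_eq_of_forall hco ?_⟩
  intro j hj
  show ((j + 1 : ℤ)) • Y.coeff (j + 1) = 0
  rcases lt_trichotomy (j + 1) 0 with h | h | h
  · rw [hneg _ h, smul_zero]
  · rw [h, zero_smul]
  · rw [hmin _ h (by omega), smul_zero]

lemma order_bOf [CharZero L] {n : ℕ} (hn : 0 < n) (Y : LaurentSeries L)
    (hneg : ∀ j : ℤ, j < 0 → Y.coeff j = 0)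
    {m : ℤ} (hm : 0 < m) (hc : Y.coeff m ≠ 0)
    (hmin : ∀ j : ℤ, 0 < j → j < m → Y.coeff j = 0) :
    bOf n Y ≠ 0 ∧ (bOf n Y).order = m - n := by
  obtain ⟨h1, h2⟩ := order_lderiv Y hneg hm hc hmin
  have hnL : ((n : L))⁻¹ ≠ 0 := by
    apply inv_ne_zero
    exact_mod_cast Nat.cast_ne_zero.mpr hn.ne'
  have hsing : (HahnSeries.single (1 - (n:ℤ)) ((n:L)⁻¹) : LaurentSeries L) ≠ 0 :=
    HahnSeries.single_ne_zero hnL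
  constructor
  · exact mul_ne_zero hsing h1
  · rw [bOf, HahnSeries.order_mul hsing h1, HahnSeries.order_single hnL, h2]
    ring

end hahn

/-- **Solutions in the same place have the same ramification order.**
Suppose `y₁(x)` and `y₂(x)` are Puiseux series solutions of `F(y, y') = 0`
(represented by Laurent series `Y₁, Y₂` with ramification orders `n₁, n₂`)
lying in the same place of the curve `F(y, p) = 0`: their associated
parametrizations `Δ(y₁) = (Y₁, bOf n₁ Y₁)` and `Δ(y₂) = (Y₂, bOf n₂ Y₂)` are
related by reparametrization by an order-one formal power series `s`.  Then
`n₁ = n₂`. -/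
theorem same_place_same_ramification
    (K : Type*) [Field K] [CharZero K]
    (F : MvPolynomial (Fin 2) K)
    (n₁ n₂ : ℕ) (Y₁ Y₂ : LaurentSeries (AlgebraicClosure K))
    (h₁ : IsPuiseuxSolutionRep F n₁ Y₁) (h₂ : IsPuiseuxSolutionRep F n₂ Y₂)
    (s : PowerSeries (AlgebraicClosure K))
    (hs0 : PowerSeries.constantCoeff s = 0)
    (hs1 : PowerSeries.coeff 1 s ≠ 0)
    (ha : lcomp Y₁ s = Y₂) (hb : lcomp (bOf n₁ Y₁) s = bOf n₂ Y₂) :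
    n₁ = n₂ := by
  haveI : CharZero (AlgebraicClosure K) :=
    charZero_of_injective_algebraMap (algebraMap K (AlgebraicClosure K)).injective
  obtain ⟨hn₁, -, hneg₁, hnc₁, -⟩ := h₁
  obtain ⟨hn₂, -, hneg₂, hnc₂, -⟩ := h₂
  obtain ⟨m₁, hm₁, hc₁, hmin₁⟩ := exists_min_pos_support Y₁ hneg₁ hnc₁
  obtain ⟨m₂, hm₂, hc₂, hmin₂⟩ := exists_min_pos_support Y₂ hneg₂ hnc₂
  have hY₁ : Y₁ ≠ 0 := fun h => hc₁ (by simp [h])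
  have hY₂ : Y₂ ≠ 0 := fun h => hc₂ (by simp [h])
  obtain ⟨-, hordY⟩ := lcomp_ne_zero_and_order Y₁ hY₁ hs0 hs1
  rw [ha] at hordY
  -- `m₁ = m₂`
  have hmm : m₁ = m₂ := by
    have ho₁ : 0 ≤ Y₁.order := by
      by_contra hlt
      push_neg at hlt
      exact (HahnSeries.coeff_order_eq_zero.not.mpr hY₁) (hneg₁ _ hlt)
    rcases eq_or_lt_of_le ho₁ with h0 | hpos
    · -- order zero case: compute coefficients of `Y₂ = lcomp Y₁ s`
      have hY₂eq : Y₂ = HahnSeries.ofPowerSeries ℤ (AlgebraicClosure K)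
          (pscomp Y₁.powerSeriesPart s) := by
        rw [← ha, lcomp, ← h0, zpow_zero, one_mul]
      set M := m₁.toNat with hMdef
      have hM : (M : ℤ) = m₁ := Int.toNat_of_nonneg hm₁.le
      have hMpos : 0 < M := by omega
      have hfP : ∀ k : ℕ, 0 < k → k < M →
          PowerSeries.coeff k Y₁.powerSeriesPart = 0 := by
        intro k hk hkM
        rw [LaurentSeries.powerSeriesPart_coeff, ← h0, zero_add]
        exact hmin₁ _ (by exact_mod_cast hk) (by omega)
      have hcm : Y₂.coeff m₁ ≠ 0 := by
        rw [← hM, hY₂eq, HahnSeries.ofPowerSeries_apply_coeff,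
          pscomp_coeff_min _ hs0 hMpos hfP, LaurentSeries.powerSeriesPart_coeff,
          ← h0, zero_add, hM]
        exact mul_ne_zero hc₁ (pow_ne_zero _ hs1)
      have hzero : ∀ j : ℤ, 0 < j → j < m₁ → Y₂.coeff j = 0 := by
        intro j hj hjm
        have hjN : ((j.toNat : ℤ)) = j := Int.toNat_of_nonneg hj.le
        rw [← hjN, hY₂eq, HahnSeries.ofPowerSeries_apply_coeff]
        exact pscomp_coeff_lt _ hs0 hMpos hfP (by omega) (by omega)
      rcases lt_trichotomy m₁ m₂ with h | h | h
      · exact absurd (hmin₂ _ hm₁ h) hcm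
      · exact h
      · exact absurd (hzero _ hm₂ h) hc₂
    · -- positive order case: `mᵢ = Yᵢ.order`
      have e₁ : m₁ = Y₁.order := by
        have hle : Y₁.order ≤ m₁ := HahnSeries.order_le_of_coeff_ne_zero hc₁
        rcases eq_or_lt_of_le hle with h | h
        · exact h.symm
        · exact absurd (hmin₁ _ hpos h) ((HahnSeries.coeff_order_eq_zero.not.mpr hY₁))
      have e₂ : m₂ = Y₂.order := by
        have hpos₂ : 0 < Y₂.order := by rw [hordY]; exact hpos
        have hle : Y₂.order ≤ m₂ := HahnSeries.order_le_of_coeff_ne_zero hc₂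
        rcases eq_or_lt_of_le hle with h | h
        · exact h.symm
        · exact absurd (hmin₂ _ hpos₂ h) ((HahnSeries.coeff_order_eq_zero.not.mpr hY₂))
      rw [e₁, e₂, hordY]
  -- orders of the `bOf` series
  obtain ⟨hb₁ne, hb₁o⟩ := order_bOf hn₁ Y₁ hneg₁ hm₁ hc₁ hmin₁
  obtain ⟨hb₂ne, hb₂o⟩ := order_bOf hn₂ Y₂ hneg₂ hm₂ hc₂ hmin₂
  obtain ⟨-, hordB⟩ := lcomp_ne_zero_and_order (bOf n₁ Y₁) hb₁ne hs0 hs1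
  rw [hb, hb₂o, hb₁o] at hordB
  omega
end
end

section
/- If s(x) is a truncation of a formal power series solution y(x) of F(y, y') = 0 such that the change of variables z(x) = y(x) − s(x) transforms the equation G(x, z, z') = F(z + s(x), z' + s'(x)) = 0 into an equation of Briot–Bouquet type (quasi-solved form x·z' = c·z + x·(higher order terms) with c not a positive integer), then the extension of s(x) to a full solution y(x) of F(y, y') = 0 exists and is unique. -/
noncomputable section

variable {L : Type*} [Field L]

/-- Evaluation `f(X, z)` of a two-variable formal power series `f` (variables
`0 = x`, `1 = z`) at the pair `(x, z(x))`, where `z` is a power series with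
zero constant coefficient (then each coefficient of the result is the visible
finite sum). -/
def mvcomp (f : MvPowerSeries (Fin 2) L) (z : PowerSeries L) : PowerSeries L :=
  PowerSeries.mk fun n => ∑ i ∈ Finset.range (n + 1), ∑ j ∈ Finset.range (n + 1),
    MvPowerSeries.coeff (Finsupp.single 0 i + Finsupp.single 1 j) f *
      PowerSeries.coeff (n - i) (z ^ j)


lemma coeff_pow_congr (z w : PowerSeries L) (j : ℕ) :
    ∀ n : ℕ, (∀ k ≤ n, PowerSeries.coeff k z = PowerSeries.coeff k w) →
      PowerSeries.coeff n (z ^ j) = PowerSeries.coeff n (w ^ j) := by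
  induction j with
  | zero => simp
  | succ j ih =>
    intro n h
    rw [pow_succ, pow_succ, PowerSeries.coeff_mul, PowerSeries.coeff_mul]
    refine Finset.sum_congr rfl fun p hp => ?_
    rw [Finset.HasAntidiagonal.mem_antidiagonal] at hp
    rw [ih p.1 fun k hk => h k (by omega), h p.2 (by omega)]

lemma coeff_pow_congr_lt (z w : PowerSeries L)
    (hz0 : PowerSeries.constantCoeff z = 0) (hw0 : PowerSeries.constantCoeff w = 0)
    (j n : ℕ) (hj : j ≠ 1) (h : ∀ k < n, PowerSeries.coeff k z = PowerSeries.coeff k w) :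
    PowerSeries.coeff n (z ^ j) = PowerSeries.coeff n (w ^ j) := by
  match j, hj with
  | 0, _ => simp
  | (j+2), _ =>
    rw [show z ^ (j+2) = z ^ (j+1) * z from pow_succ z (j+1),
      show w ^ (j+2) = w ^ (j+1) * w from pow_succ w (j+1),
      PowerSeries.coeff_mul, PowerSeries.coeff_mul]
    refine Finset.sum_congr rfl fun p hp => ?_
    rw [Finset.HasAntidiagonal.mem_antidiagonal] at hp
    rcases Nat.eq_zero_or_pos p.1 with h1 | h1
    · have : PowerSeries.coeff p.1 (z ^ (j+1)) = 0 ∧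
          PowerSeries.coeff p.1 (w ^ (j+1)) = 0 := by
        constructor <;>
        · rw [h1, PowerSeries.coeff_zero_eq_constantCoeff_apply, map_pow]
          simp [hz0, hw0]
      rw [this.1, this.2, zero_mul, zero_mul]
    rcases Nat.eq_zero_or_pos p.2 with h2 | h2
    · simp [h2, PowerSeries.coeff_zero_eq_constantCoeff_apply, hz0, hw0]
    · rw [coeff_pow_congr z w (j+1) p.1 (fun k hk => h k (by omega)), h p.2 (by omega)]

def bbAux (f : MvPowerSeries (Fin 2) L) : ℕ → L
  | 0 => 0
  | (n+1) =>
    (((n+1 : ℕ) : L) - MvPowerSeries.coeff (Finsupp.single 1 1) f)⁻¹ *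
      ∑ i ∈ Finset.range (n+2), ∑ j ∈ Finset.range (n+2),
        MvPowerSeries.coeff (Finsupp.single 0 i + Finsupp.single 1 j) f *
          PowerSeries.coeff (n+1-i)
            ((PowerSeries.mk (fun k => if _ : k < n+1 then bbAux f k else 0)) ^ j)
  termination_by n => n
  decreasing_by omega

lemma mvcomp_coeff_key (f : MvPowerSeries (Fin 2) L) (z w : PowerSeries L)
    (hz0 : PowerSeries.constantCoeff z = 0) (hw0 : PowerSeries.constantCoeff w = 0)
    (n : ℕ) (h : ∀ k ≤ n, PowerSeries.coeff k z = PowerSeries.coeff k w) :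
    PowerSeries.coeff (n+1) (mvcomp f z) =
      PowerSeries.coeff (n+1) (mvcomp f w) +
        MvPowerSeries.coeff (Finsupp.single 1 1) f *
          (PowerSeries.coeff (n+1) z - PowerSeries.coeff (n+1) w) := by
  set c := MvPowerSeries.coeff (Finsupp.single 1 1) f with hcdef
  rw [mvcomp, mvcomp, PowerSeries.coeff_mk, PowerSeries.coeff_mk]
  have step : ∀ i ∈ Finset.range (n+2), ∀ j ∈ Finset.range (n+2),
      MvPowerSeries.coeff (Finsupp.single 0 i + Finsupp.single 1 j) f *
        PowerSeries.coeff (n+1-i) (z ^ j)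
      = MvPowerSeries.coeff (Finsupp.single 0 i + Finsupp.single 1 j) f *
          PowerSeries.coeff (n+1-i) (w ^ j) +
        (if i = 0 ∧ j = 1 then
          c * (PowerSeries.coeff (n+1) z - PowerSeries.coeff (n+1) w) else 0) := by
    intro i _ j _
    by_cases hij : i = 0 ∧ j = 1
    · obtain ⟨hi, hj⟩ := hij
      subst hi hj
      rw [if_pos (⟨rfl, rfl⟩ : (0:ℕ) = 0 ∧ (1:ℕ) = 1), pow_one, pow_one, Nat.sub_zero,
        Finsupp.single_zero, zero_add, ← hcdef]
      ring
    · rw [if_neg hij, add_zero]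
      rcases Nat.eq_zero_or_pos i with hi | hi
      · subst hi
        have hj : j ≠ 1 := fun hj => hij ⟨rfl, hj⟩
        rw [coeff_pow_congr_lt z w hz0 hw0 j (n+1-0) hj (fun k hk => h k (by omega))]
      · rw [coeff_pow_congr z w j (n+1-i) (fun k hk => h k (by omega))]
  rw [Finset.sum_congr rfl (fun i hi => Finset.sum_congr rfl (step i hi))]
  rw [Finset.sum_congr rfl (fun i _ => Finset.sum_add_distrib), Finset.sum_add_distrib]
  congr 1
  have h1 : ∀ i ∈ Finset.range (n+2),
      (∑ j ∈ Finset.range (n+2), if i = 0 ∧ j = 1 then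
        c * (PowerSeries.coeff (n+1) z - PowerSeries.coeff (n+1) w) else 0)
      = if i = 0 then c * (PowerSeries.coeff (n+1) z - PowerSeries.coeff (n+1) w)
        else 0 := by
    intro i _
    rcases Nat.eq_zero_or_pos i with hi | hi
    · subst hi
      simp only [true_and, if_pos rfl]
      rw [Finset.sum_ite_eq' (Finset.range (n+2)) 1]
      simp
    · have : i ≠ 0 := by omega
      simp [this]
  rw [Finset.sum_congr rfl h1, Finset.sum_ite_eq' (Finset.range (n+2)) 0]
  simp

lemma bb_existsUnique (f : MvPowerSeries (Fin 2) L) [CharZero L]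
    (hf0 : MvPowerSeries.constantCoeff f = 0)
    (hc : ∀ m : ℕ, 0 < m → MvPowerSeries.coeff (Finsupp.single 1 1) f ≠ (m : L)) :
    ∃! z : PowerSeries L, PowerSeries.constantCoeff z = 0 ∧
      PowerSeries.X * z.derivativeFun = mvcomp f z := by
  set c := MvPowerSeries.coeff (Finsupp.single 1 1) f with hcdef
  have hd : ∀ n : ℕ, (((n+1 : ℕ) : L) - c) ≠ 0 := by
    intro n hn
    exact hc (n+1) (by omega) (by rw [sub_eq_zero] at hn; exact hn.symm)
  set z : PowerSeries L := PowerSeries.mk (bbAux f) with hzdef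
  have hz0 : PowerSeries.constantCoeff z = 0 := by
    rw [hzdef, ← PowerSeries.coeff_zero_eq_constantCoeff_apply, PowerSeries.coeff_mk, bbAux]
  -- coefficient of X * derivativeFun at n+1
  have hXd : ∀ (u : PowerSeries L) (n : ℕ),
      PowerSeries.coeff (n+1) (PowerSeries.X * u.derivativeFun)
        = PowerSeries.coeff (n+1) u * ((n : L) + 1) := by
    intro u n
    rw [PowerSeries.coeff_succ_X_mul]; exact PowerSeries.coeff_derivative u n
  have heq : PowerSeries.X * z.derivativeFun = mvcomp f z := by
    ext m
    cases m with
    | zero =>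
      rw [PowerSeries.coeff_zero_eq_constantCoeff_apply, map_mul,
        PowerSeries.constantCoeff_X, zero_mul]
      rw [mvcomp, PowerSeries.coeff_mk]
      simp only [Finset.range_one, Finset.sum_singleton, pow_zero, Finsupp.single_zero,
        zero_add, MvPowerSeries.coeff_zero_eq_constantCoeff_apply, hf0, zero_mul]
    | succ n =>
      set w : PowerSeries L := PowerSeries.mk (fun k => if _ : k < n+1 then bbAux f k else 0)
        with hwdef
      have hw0 : PowerSeries.constantCoeff w = 0 := by
        rw [hwdef, ← PowerSeries.coeff_zero_eq_constantCoeff_apply, PowerSeries.coeff_mk,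
          dif_pos (Nat.succ_pos n), bbAux]
      have hagree : ∀ k ≤ n, PowerSeries.coeff k z = PowerSeries.coeff k w := by
        intro k hk
        rw [hzdef, hwdef, PowerSeries.coeff_mk, PowerSeries.coeff_mk, dif_pos (by omega)]
      have hzw := mvcomp_coeff_key f z w hz0 hw0 n hagree
      have hwn : PowerSeries.coeff (n+1) w = 0 := by
        rw [hwdef, PowerSeries.coeff_mk, dif_neg (by omega)]
      have hmvw : PowerSeries.coeff (n+1) (mvcomp f w)
          = (((n+1 : ℕ) : L) - c) * bbAux f (n+1) := by
        rw [mvcomp, PowerSeries.coeff_mk]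
        rw [show bbAux f (n+1) = (((n+1 : ℕ) : L) - c)⁻¹ *
          ∑ i ∈ Finset.range (n+2), ∑ j ∈ Finset.range (n+2),
            MvPowerSeries.coeff (Finsupp.single 0 i + Finsupp.single 1 j) f *
              PowerSeries.coeff (n+1-i)
                ((PowerSeries.mk (fun k => if _ : k < n+1 then bbAux f k else 0)) ^ j)
          from by rw [bbAux]]
        rw [← mul_assoc, mul_inv_cancel₀ (hd n), one_mul]
      have hzn : PowerSeries.coeff (n+1) z = bbAux f (n+1) := by
        rw [hzdef, PowerSeries.coeff_mk]
      rw [hXd z n, hzw, hmvw, hwn, hzn]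
      push_cast
      ring
  refine ⟨z, ⟨hz0, heq⟩, ?_⟩
  rintro y ⟨hy0, hyeq⟩
  ext m
  induction m using Nat.strong_induction_on with
  | _ m ih =>
  cases m with
  | zero =>
    rw [PowerSeries.coeff_zero_eq_constantCoeff_apply,
      PowerSeries.coeff_zero_eq_constantCoeff_apply, hy0, hz0]
  | succ n =>
    have hagree : ∀ k ≤ n, PowerSeries.coeff k y = PowerSeries.coeff k z :=
      fun k hk => ih k (by omega)
    have key := mvcomp_coeff_key f y z hy0 hz0 n hagree
    have e1 : PowerSeries.coeff (n+1) y * ((n : L) + 1)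
        = PowerSeries.coeff (n+1) (mvcomp f y) := by rw [← hXd y n, hyeq]
    have e2 : PowerSeries.coeff (n+1) z * ((n : L) + 1)
        = PowerSeries.coeff (n+1) (mvcomp f z) := by rw [← hXd z n, heq]
    rw [← hcdef] at key
    have : (PowerSeries.coeff (n+1) y - PowerSeries.coeff (n+1) z)
        * (((n : L) + 1) - c) = 0 := by
      linear_combination e1 - e2 + key
    rcases mul_eq_zero.mp this with h | h
    · exact sub_eq_zero.mp h
    · exfalso
      apply hd n
      push_cast
      exact h

/-- **Unique prolongation of truncations via Briot–Bouquet equations.**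
Let `F ∈ K̄[y,p]` (variables `0 = y`, `1 = p`) over an algebraically closed
field `K̄` of characteristic zero, and let `s(x) ∈ K̄[x]` be a polynomial
truncation of a solution such that the change of variables `z = y − s(x)`
transforms `F(y, y') = 0` into an equation of Briot–Bouquet type
`x·z' = f(x, z)`, where `f` is a formal power series in two variables with
`f(0,0) = 0` and `c = ∂f/∂z(0,0)` not a positive integer.  (The transformation
is recorded by the hypothesis `hequiv`.)  Then the extension of `s(x)` to a
full power series solution `y(x)` of `F(y, y') = 0` exists and is unique. -/
theorem briot_bouquet_unique_prolongation
    [CharZero L] [IsAlgClosed L]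
    (F : MvPolynomial (Fin 2) L) (s : Polynomial L)
    (f : MvPowerSeries (Fin 2) L)
    (hf0 : MvPowerSeries.constantCoeff f = 0)
    (hc : ∀ m : ℕ, 0 < m →
      MvPowerSeries.coeff (Finsupp.single 1 1) f ≠ (m : L))
    (hequiv : ∀ z : PowerSeries L, PowerSeries.constantCoeff z = 0 →
      (MvPolynomial.aeval
          ![(s : PowerSeries L) + z,
            ((Polynomial.derivative s : Polynomial L) : PowerSeries L) + z.derivativeFun]
          F = 0 ↔
        PowerSeries.X * z.derivativeFun = mvcomp f z)) :
    ∃! y : PowerSeries L,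
      PowerSeries.constantCoeff (y - (s : PowerSeries L)) = 0 ∧
      MvPolynomial.aeval ![y, y.derivativeFun] F = 0 := by
  obtain ⟨z, ⟨hz0, hzeq⟩, huniq⟩ := bb_existsUnique f hf0 hc
  have hder : ∀ u : PowerSeries L, ((s : PowerSeries L) + u).derivativeFun
      = ((Polynomial.derivative s : Polynomial L) : PowerSeries L) + u.derivativeFun := by
    intro u
    rw [PowerSeries.derivativeFun_add]; congr 1; exact PowerSeries.derivative_coe s
  refine ⟨(s : PowerSeries L) + z, ⟨by simp [hz0], ?_⟩, ?_⟩
  · rw [hder z]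
    exact (hequiv z hz0).mpr hzeq
  · rintro y ⟨hy0, hyF⟩
    set u := y - (s : PowerSeries L) with hudef
    have hyu : y = (s : PowerSeries L) + u := by rw [hudef]; ring
    have hu0 : PowerSeries.constantCoeff u = 0 := hy0
    have huz : u = z := by
      apply huniq
      refine ⟨hu0, (hequiv u hu0).mp ?_⟩
      rw [← hder u, ← hyu]
      exact hyF
    rw [hyu, huz]
end
end
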